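/- Let a₁ ≥ a₂ ≥ 0 with a₁ + a₂ ≤ π/2, let b₁ ≥ b₂ ≥ 0 with b₁ + b₂ ≤ π/2, and let β ∈ [0, π/4]. Then the pair of conditions cos(2(a₁−a₂+β)) ≤ cos(2(b₁−b₂)) ≤ cos(2(a₁−a₂−β)) and cos(2(a₁+a₂+β)) ≤ cos(2(b₁+b₂)) ≤ cos(2(a₁+a₂−β)) holds if and only if the linear inequalities a₁+a₂−β ≤ b₁+b₂ ≤ π/2 − |π/2 − (a₁+a₂+β)| and |a₁−a₂−β| ≤ b₁−b₂ ≤ a₁−a₂+β hold. -/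

import Mathlib

open Real

private lemma cos_le_cos_iff_Icc {x y : ℝ} (hx0 : 0 ≤ x) (hx : x ≤ π)
    (hy0 : 0 ≤ y) (hy : y ≤ π) :
    Real.cos x ≤ Real.cos y ↔ y ≤ x :=
  Real.strictAntiOn_cos.le_iff_ge ⟨hx0, hx⟩ ⟨hy0, hy⟩

private lemma cos_le_cos_iff_two_pi {x y : ℝ} (hx0 : 0 ≤ x) (hx : x ≤ 2 * π)
    (hy0 : 0 ≤ y) (hy : y ≤ π) :
    Real.cos x ≤ Real.cos y ↔ y ≤ x ∧ y ≤ 2 * π - x := by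
  have h2 : Real.cos x = Real.cos (min x (2 * π - x)) := by
    rcases le_total x (2 * π - x) with h | h
    · rw [min_eq_left h]
    · rw [min_eq_right h, show 2 * π - x = -(x - 2 * π) by ring, Real.cos_neg,
        Real.cos_sub_two_pi]
  have hπ := Real.pi_pos
  rw [h2, cos_le_cos_iff_Icc (le_min hx0 (by linarith))
      (by
        rcases le_total x π with h | h
        · exact le_trans (min_le_left _ _) h
        · exact le_trans (min_le_right _ _) (by linarith)) hy0 hy, le_min_iff]

private lemma cos_abs_le_iff {x y : ℝ} (hx : |x| ≤ π) (hy0 : 0 ≤ y) (hy : y ≤ π) :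
    Real.cos y ≤ Real.cos x ↔ |x| ≤ y := by
  rw [← Real.cos_abs x, cos_le_cos_iff_Icc hy0 hy (abs_nonneg x) hx]

theorem interference_trig_iff_linear
    (a₁ a₂ b₁ b₂ β : ℝ)
    (ha : a₁ ≥ a₂) (ha2 : a₂ ≥ 0) (hasum : a₁ + a₂ ≤ π / 2)
    (hb : b₁ ≥ b₂) (hb2 : b₂ ≥ 0) (hbsum : b₁ + b₂ ≤ π / 2)
    (hβ : β ∈ Set.Icc 0 (π / 4)) :
    ((Real.cos (2 * (a₁ - a₂ + β)) ≤ Real.cos (2 * (b₁ - b₂)) ∧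
        Real.cos (2 * (b₁ - b₂)) ≤ Real.cos (2 * (a₁ - a₂ - β))) ∧
      (Real.cos (2 * (a₁ + a₂ + β)) ≤ Real.cos (2 * (b₁ + b₂)) ∧
        Real.cos (2 * (b₁ + b₂)) ≤ Real.cos (2 * (a₁ + a₂ - β)))) ↔
    ((a₁ + a₂ - β ≤ b₁ + b₂ ∧ b₁ + b₂ ≤ π / 2 - |π / 2 - (a₁ + a₂ + β)|) ∧
      (|a₁ - a₂ - β| ≤ b₁ - b₂ ∧ b₁ - b₂ ≤ a₁ - a₂ + β)) := by
  obtain ⟨hβ0, hβ4⟩ := hβ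
  have hπ := Real.pi_pos
  have h1 : Real.cos (2 * (a₁ - a₂ + β)) ≤ Real.cos (2 * (b₁ - b₂)) ↔
      2 * (b₁ - b₂) ≤ 2 * (a₁ - a₂ + β) ∧
      2 * (b₁ - b₂) ≤ 2 * π - 2 * (a₁ - a₂ + β) :=
    cos_le_cos_iff_two_pi (by linarith) (by linarith) (by linarith) (by linarith)
  have h2 : Real.cos (2 * (b₁ - b₂)) ≤ Real.cos (2 * (a₁ - a₂ - β)) ↔
      |2 * (a₁ - a₂ - β)| ≤ 2 * (b₁ - b₂) :=
    cos_abs_le_iff (abs_le.mpr ⟨by linarith, by linarith⟩) (by linarith) (by linarith)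
  have h3 : Real.cos (2 * (a₁ + a₂ + β)) ≤ Real.cos (2 * (b₁ + b₂)) ↔
      2 * (b₁ + b₂) ≤ 2 * (a₁ + a₂ + β) ∧
      2 * (b₁ + b₂) ≤ 2 * π - 2 * (a₁ + a₂ + β) :=
    cos_le_cos_iff_two_pi (by linarith) (by linarith) (by linarith) (by linarith)
  have h4 : Real.cos (2 * (b₁ + b₂)) ≤ Real.cos (2 * (a₁ + a₂ - β)) ↔
      |2 * (a₁ + a₂ - β)| ≤ 2 * (b₁ + b₂) :=
    cos_abs_le_iff (abs_le.mpr ⟨by linarith, by linarith⟩) (by linarith) (by linarith)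
  rw [h1, h2, h3, h4, le_sub_comm (a := b₁ + b₂) (c := |π / 2 - (a₁ + a₂ + β)|),
    abs_le, abs_le, abs_le, abs_le]
  constructor
  · rintro ⟨⟨⟨p1, p2⟩, p3, p4⟩, ⟨p5, p6⟩, p7, p8⟩
    exact ⟨⟨by linarith, by linarith, by linarith⟩,
      ⟨by linarith, by linarith⟩, by linarith⟩
  · rintro ⟨⟨q1, q2, q3⟩, ⟨q4, q5⟩, q6⟩
    exact ⟨⟨⟨by linarith, by linarith⟩, by linarith, by linarith⟩,
      ⟨by linarith, by linarith⟩, by linarith, by linarith⟩
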